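/- Let R be an arbitrary ring and H a finite index subgroup of the additive group (R,+). Then the set H + R·H (where R·H = {rh : r ∈ R, h ∈ H}) contains a two-sided ideal of R of finite additive index. -/

import Mathlib

open Pointwise

section Stmt4Aux

variable {R : Type*} [NonUnitalRing R]

/-- The set of left multiples of a fixed element, as an additive subgroup. -/
def stmt4MulLine (a : R) : AddSubgroup R where
  carrier := {x | ∃ r : R, r * a = x}
  zero_mem' := ⟨0, zero_mul a⟩
  add_mem' := by
    rintro x y ⟨r, rfl⟩ ⟨s, rfl⟩
    exact ⟨r + s, add_mul r s a⟩
  neg_mem' := by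
    rintro x ⟨r, rfl⟩
    exact ⟨-r, neg_mul r a⟩

lemma stmt4MulLine_mem {a r : R} : r * a ∈ stmt4MulLine a := ⟨r, rfl⟩

/-- The additive subgroup generated by all products `r * h` with `h ∈ X`. -/
def stmt4Sp (X : AddSubgroup R) : AddSubgroup R :=
  AddSubgroup.closure {x | ∃ r : R, ∃ h ∈ X, r * h = x}

lemma stmt4Sp_mono {X Y : AddSubgroup R} (h : X ≤ Y) : stmt4Sp X ≤ stmt4Sp Y := by
  apply AddSubgroup.closure_mono
  rintro x ⟨r, a, ha, rfl⟩
  exact ⟨r, a, h ha, rfl⟩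

lemma mem_stmt4Sp {X : AddSubgroup R} (r : R) {h : R} (hh : h ∈ X) : r * h ∈ stmt4Sp X :=
  AddSubgroup.subset_closure ⟨r, h, hh, rfl⟩

lemma stmt4Sp_mul_left {X : AddSubgroup R} (s : R) {x : R} (hx : x ∈ stmt4Sp X) :
    s * x ∈ stmt4Sp X := by
  induction hx using AddSubgroup.closure_induction with
  | mem x hx =>
      obtain ⟨r, a, ha, rfl⟩ := hx
      rw [← mul_assoc]
      exact mem_stmt4Sp (s * r) ha
  | zero => rw [mul_zero]; exact zero_mem _
  | add x y hx hy px py => rw [mul_add]; exact add_mem px py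
  | neg x hx px => rw [mul_neg]; exact neg_mem px

lemma stmt4MulLine_le_sp {X : AddSubgroup R} {h : R} (hh : h ∈ X) :
    stmt4MulLine h ≤ stmt4Sp X := by
  rintro x ⟨r, rfl⟩
  exact mem_stmt4Sp r hh

lemma stmt4MulLine_add_le (a b : R) :
    stmt4MulLine (a + b) ≤ stmt4MulLine a ⊔ stmt4MulLine b := by
  rintro x ⟨r, rfl⟩
  rw [mul_add]
  exact AddSubgroup.add_mem_sup stmt4MulLine_mem stmt4MulLine_mem

lemma stmt4MulLine_neg_le (a : R) : stmt4MulLine (-a) ≤ stmt4MulLine a := by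
  rintro x ⟨r, rfl⟩
  exact ⟨-r, by rw [neg_mul, mul_neg]⟩

/-- Preimage of a finite index subgroup under an additive hom has finite index. -/
lemma stmt4_comap_finiteIndex {A B : Type*} [AddCommGroup A] [AddCommGroup B]
    (f : A →+ B) (L : AddSubgroup B) (hL : L.FiniteIndex) : (L.comap f).FiniteIndex := by
  haveI := hL
  haveI : Finite (B ⧸ L) := AddSubgroup.finite_quotient_of_finiteIndex (H := L)
  have hinj : Function.Injective
      (QuotientAddGroup.map (L.comap f) L f le_rfl) := by
    intro a b
    induction a using QuotientAddGroup.induction_on with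
    | H a =>
    induction b using QuotientAddGroup.induction_on with
    | H b =>
    intro hab
    rw [QuotientAddGroup.map_mk, QuotientAddGroup.map_mk] at hab
    rw [QuotientAddGroup.eq] at hab ⊢
    simpa [AddSubgroup.mem_comap, map_add, map_neg] using hab
  haveI : Finite (A ⧸ L.comap f) := Finite.of_injective _ hinj
  exact AddSubgroup.finiteIndex_of_finite_quotient (H := L.comap f)

lemma stmt4_finiteIndex_of_le {G : Type*} [AddGroup G] {K L : AddSubgroup G}
    (h : K ≤ L) (hK : K.FiniteIndex) : L.FiniteIndex := by
  constructor
  intro h0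
  have := AddSubgroup.index_dvd_of_le h
  rw [h0] at this
  exact hK.index_ne_zero (Nat.eq_zero_of_zero_dvd this)

lemma stmt4_eq_of_le_of_index_eq {G : Type*} [AddGroup G] {K L : AddSubgroup G}
    (h : K ≤ L) (hidx : K.index = L.index) (hne : L.index ≠ 0) : K = L := by
  have h1 : K.relIndex L * L.index = K.index := AddSubgroup.relIndex_mul_index h
  rw [hidx] at h1
  have h2 : K.relIndex L = 1 := by
    have := Nat.eq_of_mul_eq_mul_right (Nat.pos_of_ne_zero hne)
      (h1.trans (one_mul L.index).symm)
    exact this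
  exact le_antisymm h (AddSubgroup.relIndex_eq_one.mp h2)



/-- Maximize the index of `H ⊔ sp X` over finite-index subgroups `X ≤ H`. -/
lemma stmt4_max {R : Type*} [NonUnitalRing R] (H : AddSubgroup R) (hH : H.FiniteIndex) :
    ∃ H₁ : AddSubgroup R, H₁ ≤ H ∧ H₁.FiniteIndex ∧
      ∀ X : AddSubgroup R, X ≤ H₁ → X.FiniteIndex →
        H ⊔ stmt4Sp X = H ⊔ stmt4Sp H₁ := by
  classical
  have hn0 : H.index ≠ 0 := hH.index_ne_zero
  have hbound : ∀ X : AddSubgroup R, (H ⊔ stmt4Sp X).index ≤ H.index ∧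
      (H ⊔ stmt4Sp X).index ≠ 0 := by
    intro X
    have hdvd : (H ⊔ stmt4Sp X).index ∣ H.index := AddSubgroup.index_dvd_of_le le_sup_left
    have hne : (H ⊔ stmt4Sp X).index ≠ 0 := by
      intro h0
      rw [h0] at hdvd
      exact hn0 (Nat.eq_zero_of_zero_dvd hdvd)
    exact ⟨Nat.le_of_dvd (Nat.pos_of_ne_zero hn0) hdvd, hne⟩
  let P : ℕ → Prop := fun m =>
    ∃ X : AddSubgroup R, X ≤ H ∧ X.FiniteIndex ∧ (H ⊔ stmt4Sp X).index = m
  have hPH : P ((H ⊔ stmt4Sp H).index) := ⟨H, le_rfl, hH, rfl⟩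
  have hPm : P (Nat.findGreatest P H.index) := Nat.findGreatest_spec (hbound H).1 hPH
  obtain ⟨H₁, hH₁H, hH₁fin, hidx⟩ := hPm
  refine ⟨H₁, hH₁H, hH₁fin, ?_⟩
  intro X hXle hXfin
  have h1 : H ⊔ stmt4Sp X ≤ H ⊔ stmt4Sp H₁ :=
    sup_le le_sup_left ((stmt4Sp_mono hXle).trans le_sup_right)
  have h2 : (H ⊔ stmt4Sp X).index ≤ Nat.findGreatest P H.index :=
    Nat.le_findGreatest (hbound X).1 ⟨X, hXle.trans hH₁H, hXfin, rfl⟩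
  have h3 : (H ⊔ stmt4Sp H₁).index ∣ (H ⊔ stmt4Sp X).index :=
    AddSubgroup.index_dvd_of_le h1
  have h4 : Nat.findGreatest P H.index ≤ (H ⊔ stmt4Sp X).index := by
    rw [← hidx]
    exact Nat.le_of_dvd (Nat.pos_of_ne_zero (hbound X).2) h3
  refine stmt4_eq_of_le_of_index_eq h1 ?_ (hbound H₁).2
  rw [le_antisymm h2 h4, ← hidx]

/-- B. H. Neumann covering step: some single `h₀` dominates. -/
lemma stmt4_neumann {R : Type*} [NonUnitalRing R] (H H₁ : AddSubgroup R)
    (hH : H.FiniteIndex) (hH₁H : H₁ ≤ H) (hH₁fin : H₁.FiniteIndex)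
    (key : ∀ X : AddSubgroup R, X ≤ H₁ → X.FiniteIndex →
        H ⊔ stmt4Sp X = H ⊔ stmt4Sp H₁) :
    ∃ h₀ ∈ H₁, stmt4Sp H₁ ≤ H ⊔ stmt4MulLine h₀ := by
  classical
  by_contra hcon
  push_neg at hcon
  have hproper : ∀ h : ↥H₁,
      H ≤ H ⊔ stmt4MulLine (h : R) ∧ H ⊔ stmt4MulLine (h : R) < H ⊔ stmt4Sp H₁ := by
    intro h
    refine ⟨le_sup_left, ?_⟩
    have hle : H ⊔ stmt4MulLine (h : R) ≤ H ⊔ stmt4Sp H₁ :=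
      sup_le le_sup_left ((stmt4MulLine_le_sp h.2).trans le_sup_right)
    refine lt_of_le_of_ne hle ?_
    intro heq
    exact hcon (h : R) h.2 (le_sup_right.trans heq.ge)
  haveI := hH
  haveI : Finite (R ⧸ H) := AddSubgroup.finite_quotient_of_finiteIndex (H := H)
  haveI : Finite (AddSubgroup (R ⧸ H)) :=
    Finite.of_injective (fun K => (K : Set (R ⧸ H))) SetLike.coe_injective
  haveI : Finite {K : AddSubgroup R // H ≤ K ∧ K < H ⊔ stmt4Sp H₁} := by
    apply Finite.of_injective
      (fun K : {K : AddSubgroup R // H ≤ K ∧ K < H ⊔ stmt4Sp H₁} =>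
        AddSubgroup.map (QuotientAddGroup.mk' H) K.1)
    intro K K' hKK'
    apply Subtype.ext
    have hcm : ∀ (J : AddSubgroup R), H ≤ J →
        AddSubgroup.comap (QuotientAddGroup.mk' H)
          (AddSubgroup.map (QuotientAddGroup.mk' H) J) = J := by
      intro J hJ
      rw [AddSubgroup.comap_map_eq, QuotientAddGroup.ker_mk', sup_of_le_left hJ]
    have h5 := congrArg (AddSubgroup.comap (QuotientAddGroup.mk' H)) hKK'
    simpa only [hcm K.1 K.2.1, hcm K'.1 K'.2.1] using h5
  haveI : Fintype {K : AddSubgroup R // H ≤ K ∧ K < H ⊔ stmt4Sp H₁} := Fintype.ofFinite _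
  let C : {K : AddSubgroup R // H ≤ K ∧ K < H ⊔ stmt4Sp H₁} → AddSubgroup ↥H₁ := fun K =>
    { carrier := {h : ↥H₁ | stmt4MulLine (h : R) ≤ K.1}
      zero_mem' := by
        rintro x ⟨r, rfl⟩
        simp only [AddSubgroup.coe_zero, mul_zero]
        exact zero_mem _
      add_mem' := by
        intro a b ha hb
        have ha' : stmt4MulLine (a : R) ≤ K.1 := ha
        have hb' : stmt4MulLine (b : R) ≤ K.1 := hb
        show stmt4MulLine ((a + b : ↥H₁) : R) ≤ K.1
        rw [AddSubgroup.coe_add]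
        exact (stmt4MulLine_add_le _ _).trans (sup_le ha' hb')
      neg_mem' := by
        intro a ha
        have ha' : stmt4MulLine (a : R) ≤ K.1 := ha
        show stmt4MulLine ((-a : ↥H₁) : R) ≤ K.1
        rw [AddSubgroup.coe_neg]
        exact (stmt4MulLine_neg_le _).trans ha' }
  have hcover : ⋃ K ∈ (Finset.univ : Finset {K : AddSubgroup R // H ≤ K ∧ K < H ⊔ stmt4Sp H₁}),
      ((0 : ↥H₁) +ᵥ (C K : Set ↥H₁)) = Set.univ := by
    apply Set.eq_univ_of_forall
    intro h
    simp only [Set.mem_iUnion, zero_vadd]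
    refine ⟨⟨H ⊔ stmt4MulLine (h : R), (hproper h).1, (hproper h).2⟩, Finset.mem_univ _, ?_⟩
    show stmt4MulLine (h : R) ≤ H ⊔ stmt4MulLine (h : R)
    exact le_sup_right
  obtain ⟨K, -, hKfin⟩ := AddSubgroup.exists_finiteIndex_of_leftCoset_cover hcover
  have hH₂le : (C K).map H₁.subtype ≤ H₁ := by
    rintro x ⟨y, hy, rfl⟩
    exact y.2
  have hH₂fin : ((C K).map H₁.subtype).FiniteIndex := by
    constructor
    intro h0
    have h1 : ((C K).map H₁.subtype).relIndex H₁ * H₁.index = ((C K).map H₁.subtype).index :=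
      AddSubgroup.relIndex_mul_index hH₂le
    rw [h0] at h1
    have h2 : ((C K).map H₁.subtype).addSubgroupOf H₁ = C K :=
      AddSubgroup.comap_map_eq_self_of_injective H₁.subtype_injective _
    have h3 : ((C K).map H₁.subtype).relIndex H₁ = (C K).index := by
      rw [AddSubgroup.relIndex, h2]
    rw [h3] at h1
    rcases Nat.mul_eq_zero.mp h1 with h | h
    · exact hKfin.index_ne_zero h
    · exact hH₁fin.index_ne_zero h
  have hTX := key _ hH₂le hH₂fin
  have hsp : stmt4Sp ((C K).map H₁.subtype) ≤ K.1 := by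
    rw [stmt4Sp, AddSubgroup.closure_le]
    rintro x ⟨r, a, ha, rfl⟩
    obtain ⟨y, hy, rfl⟩ := ha
    exact hy stmt4MulLine_mem
  have hTK : H ⊔ stmt4Sp H₁ ≤ K.1 := by
    have h6 : H ⊔ stmt4Sp ((C K).map H₁.subtype) ≤ K.1 := sup_le K.2.1 hsp
    rwa [hTX] at h6
  exact absurd hTK (not_le_of_gt K.2.2)

lemma stmt4_exists {R : Type*} [NonUnitalRing R] (H : AddSubgroup R) (hH : H.FiniteIndex) :
    ∃ (H₁ : AddSubgroup R) (h₀ : R), H₁ ≤ H ∧ H₁.FiniteIndex ∧ h₀ ∈ H ∧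
      stmt4Sp H₁ ≤ H ⊔ stmt4MulLine h₀ := by
  obtain ⟨H₁, hH₁H, hH₁fin, key⟩ := stmt4_max H hH
  obtain ⟨h₀, hh₀, hle⟩ := stmt4_neumann H H₁ hH hH₁H hH₁fin key
  exact ⟨H₁, h₀, hH₁H, hH₁fin, hH₁H hh₀, hle⟩

end Stmt4Aux

/-- For an arbitrary ring R and a finite index additive subgroup H of (R,+),
the set H + R·H contains a two-sided ideal of R of finite additive index. -/
theorem stmt_4 {R : Type*} [NonUnitalRing R] (H : AddSubgroup R) (hH : H.FiniteIndex) :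
    ∃ I : AddSubgroup R,
      (∀ r x : R, x ∈ I → r * x ∈ I) ∧
      (∀ r x : R, x ∈ I → x * r ∈ I) ∧
      I.FiniteIndex ∧
      (I : Set R) ⊆ (H : Set R) + Set.univ * (H : Set R) := by
  classical
  obtain ⟨H₁, h₀, hH₁le, hH₁fin, hh₀H, hsple⟩ := stmt4_exists H hH
  haveI := hH₁fin
  have hLfin : (H₁ ⊔ stmt4Sp H₁).FiniteIndex := stmt4_finiteIndex_of_le le_sup_left hH₁fin
  have hLleft : ∀ (s : R) {x : R}, x ∈ H₁ ⊔ stmt4Sp H₁ → s * x ∈ H₁ ⊔ stmt4Sp H₁ := by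
    intro s x hx
    rw [AddSubgroup.mem_sup] at hx
    obtain ⟨a, ha, b, hb, rfl⟩ := hx
    rw [mul_add]
    exact AddSubgroup.mem_sup_right (add_mem (mem_stmt4Sp s ha) (stmt4Sp_mul_left s hb))
  have hmulH₁ : ∀ (x : R) {h : R}, h ∈ H₁ → x * h ∈ H₁ ⊔ stmt4Sp H₁ := fun x h hh =>
    AddSubgroup.mem_sup_right (mem_stmt4Sp x hh)
  refine ⟨{ carrier := {x | x ∈ H₁ ⊔ stmt4Sp H₁ ∧ ∀ r : R, x * r ∈ H₁ ⊔ stmt4Sp H₁}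
            zero_mem' := ⟨zero_mem _, fun r => by rw [zero_mul]; exact zero_mem _⟩
            add_mem' := fun {a b} ha hb => ⟨add_mem ha.1 hb.1, fun r => by
              rw [add_mul]; exact add_mem (ha.2 r) (hb.2 r)⟩
            neg_mem' := fun {a} ha => ⟨neg_mem ha.1, fun r => by
              rw [neg_mul]; exact neg_mem (ha.2 r)⟩ }, ?_, ?_, ?_, ?_⟩
  · intro r x hx
    exact ⟨hLleft r hx.1, fun r' => by rw [mul_assoc]; exact hLleft r (hx.2 r')⟩
  · intro r x hx
    exact ⟨hx.2 r, fun r' => by rw [mul_assoc]; exact hx.2 (r * r')⟩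
  · haveI : Finite (R ⧸ H₁) := AddSubgroup.finite_quotient_of_finiteIndex (H := H₁)
    have hKfin : ((H₁ ⊔ stmt4Sp H₁) ⊓ ⨅ (q : R ⧸ H₁),
        (H₁ ⊔ stmt4Sp H₁).comap (AddMonoidHom.mulRight (Quotient.out q))).FiniteIndex := by
      haveI h1 : (⨅ (q : R ⧸ H₁),
          (H₁ ⊔ stmt4Sp H₁).comap (AddMonoidHom.mulRight (Quotient.out q))).FiniteIndex :=
        AddSubgroup.finiteIndex_iInf fun q =>
          stmt4_comap_finiteIndex (AddMonoidHom.mulRight (Quotient.out q)) _ hLfin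
      haveI := hLfin
      infer_instance
    refine stmt4_finiteIndex_of_le ?_ hKfin
    intro x hx
    have hx1 : x ∈ H₁ ⊔ stmt4Sp H₁ := hx.1
    have hx2 : ∀ q : R ⧸ H₁, x * Quotient.out q ∈ H₁ ⊔ stmt4Sp H₁ := fun q =>
      AddSubgroup.mem_iInf.mp (AddSubgroup.mem_inf.mp hx).2 q
    refine ⟨hx1, fun r => ?_⟩
    have h8 : -(Quotient.out (QuotientAddGroup.mk r : R ⧸ H₁)) + r ∈ H₁ := by
      rw [← QuotientAddGroup.eq]
      exact QuotientAddGroup.out_eq' _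
    have h9 : x * r = x * Quotient.out (QuotientAddGroup.mk r : R ⧸ H₁)
        + x * (-(Quotient.out (QuotientAddGroup.mk r : R ⧸ H₁)) + r) := by
      rw [← mul_add, add_neg_cancel_left]
    rw [h9]
    exact add_mem (hx2 _) (hmulH₁ x h8)
  · intro x hx
    have hxL : x ∈ H₁ ⊔ stmt4Sp H₁ := hx.1
    have hxB : x ∈ H ⊔ stmt4MulLine h₀ :=
      (sup_le (hH₁le.trans le_sup_left) hsple) hxL
    rw [AddSubgroup.mem_sup] at hxB
    obtain ⟨a, ha, b, ⟨r, rfl⟩, rfl⟩ := hxB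
    exact Set.add_mem_add ha (Set.mul_mem_mul (Set.mem_univ r) hh₀H)
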